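/- Let q be an odd prime power, r ≥ 2 even, N | q^r - 1 with gcd((q^r-1)/(q-1), N) = 2, η a primitive element of F_{q^r}, and b = r. Define P(r) as a set of representatives for the F_q-lines through the elements 1, η^N, ..., η^{(r-1)N}: P(r) = ⋃_{j=1}^{r-1} { η^{(j-1)N} + x_1 η^{jN} + ... + x_{r-j} η^{(r-1)N} : x_i ∈ F_q } ∪ {η^{(r-1)N}}, a set of cardinality (q^r-1)/(q-1). Then the number of elements of P(r) that are squares in F_{q^r}^* equals (q^r-1)/(2(q-1)), i.e., exactly half. -/

import Mathlib

open Finset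

set_option maxHeartbeats 2000000 in
set_option synthInstance.maxHeartbeats 400000 in
theorem mu_r_eq_half (q r N : ℕ) (hq : IsPrimePow q) (hodd : Odd q)
    (hr : 2 ≤ r) (hre : Even r) (hN : 0 < N) (hNdvd : N ∣ q ^ r - 1)
    (hgcd : Nat.gcd ((q ^ r - 1) / (q - 1)) N = 2)
    (F : Type*) [Field F] [Fintype F] (hF : Fintype.card F = q ^ r)
    (K : Subfield F) (hK : Nat.card K = q)
    (η : Fˣ) (hη : ∀ x : Fˣ, x ∈ Subgroup.zpowers η) :
    Nat.card {x : F //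
      (∃ j : Fin r, ∃ c : ℕ → K,
        x = (η : F) ^ (N * (j : ℕ)) +
          ∑ i ∈ Finset.Ico ((j : ℕ) + 1) r, (c i : F) * (η : F) ^ (N * i)) ∧
      ∃ w : F, w ≠ 0 ∧ w ^ 2 = x} = (q ^ r - 1) / (2 * (q - 1)) := by
  classical
  haveI : Fintype K := Fintype.ofFinite K
  have hq1 : 1 < q := hq.one_lt
  have hqodd : q % 2 = 1 := Nat.odd_iff.mp hodd
  have hq3 : 3 ≤ q := by omega
  have hrpos : 0 < r := by omega
  have hqr1 : 1 < q ^ r := Nat.one_lt_pow (by omega) hq1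
  have hKcard : Fintype.card K = q := by rw [← Nat.card_eq_fintype_card, hK]
  have hcardU : Fintype.card Fˣ = q ^ r - 1 := by rw [Fintype.card_units, hF]
  have horder : orderOf η = q ^ r - 1 := by
    rw [orderOf_eq_card_of_forall_mem_zpowers hη, Nat.card_eq_fintype_card, hcardU]
  have hchar : ringChar F ≠ 2 := by
    intro h
    have h1 := FiniteField.even_card_of_char_two h
    rw [hF] at h1
    have h2 : q ^ r % 2 = 1 := Nat.odd_iff.mp hodd.pow
    omega
  -- arithmetic: q^r - 1 = (q-1) * (2*u)
  have hdvdq1 : q - 1 ∣ q ^ r - 1 := by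
    simpa using Nat.sub_dvd_pow_sub_pow q 1 r
  set t : ℕ := (q ^ r - 1) / (q - 1) with ht
  have htmul : (q - 1) * t = q ^ r - 1 := Nat.mul_div_cancel' hdvdq1
  have hteven : 2 ∣ t := hgcd ▸ Nat.gcd_dvd_left _ _
  obtain ⟨u, hu⟩ := hteven
  have hkey : q ^ r - 1 = 2 * ((q - 1) * u) := by rw [← htmul, hu]; ring
  have hrhs : (q ^ r - 1) / (2 * (q - 1)) = u := by
    rw [show q ^ r - 1 = 2 * (q - 1) * u by rw [hkey]; ring]
    exact Nat.mul_div_cancel_left u (by omega)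
  have hhalf : (q ^ r - 1) / 2 = (q - 1) * u := by omega
  -- finrank
  have hrank : Module.finrank K F = r := by
    have hcard : Fintype.card F = Fintype.card K ^ Module.finrank K F :=
      Module.card_eq_pow_finrank
    rw [hF, hKcard] at hcard
    exact Nat.pow_right_injective (by omega) hcard.symm
  -- every nonzero element of K is a square in F
  have hKsq : ∀ k : K, k ≠ 0 → ∃ w : F, w ≠ 0 ∧ w ^ 2 = (k : F) := by
    intro k hk
    have hk0 : (k : F) ≠ 0 := by
      simpa using Subtype.coe_injective.ne hk
    have hpow : (k : F) ^ (q - 1) = 1 := by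
      have h1 := FiniteField.pow_card_sub_one_eq_one k hk
      rw [hKcard] at h1
      have h2 := congrArg (Subtype.val) h1
      push_cast at h2
      simpa using h2
    have hsq : IsSquare (k : F) := by
      rw [FiniteField.isSquare_iff hchar hk0]
      have hcard2 : Fintype.card F / 2 = (q - 1) * u := by rw [hF]; omega
      rw [hcard2, pow_mul, hpow, one_pow]
    obtain ⟨w, hw⟩ := hsq
    refine ⟨w, ?_, by rw [sq]; exact hw.symm⟩
    intro h0
    rw [h0, mul_zero] at hw
    exact hk0 hw
  -- Step 1 : basis of powers of θ = η^N
  set θ : F := (η : F) ^ N with hθdef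
  have hθne : θ ≠ 0 := pow_ne_zero _ (Units.ne_zero η)
  have hθint : IsIntegral K θ := IsIntegral.of_finite K θ
  have hdeg : (minpoly K θ).natDegree = r := by
    have hEr : Module.finrank K (IntermediateField.adjoin K {θ}) = r := by
      set E := IntermediateField.adjoin K {θ} with hE
      haveI : Fintype E := Fintype.ofFinite E
      set s : ℕ := Module.finrank K E with hs
      have hsd : s ∣ r := by
        refine ⟨Module.finrank E F, ?_⟩
        rw [← hrank, ← Module.finrank_mul_finrank K E F]
      have hspos : 0 < s := Module.finrank_pos
      have hcardE : Fintype.card E = q ^ s := by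
        have h1 : Fintype.card E = Fintype.card K ^ Module.finrank K E :=
          Module.card_eq_pow_finrank
        rw [h1, hKcard, ← hs]
      have hθE : θ ∈ E := IntermediateField.mem_adjoin_simple_self K θ
      have hpow : θ ^ (q ^ s - 1) = 1 := by
        have h1 : (⟨θ, hθE⟩ : E) ^ (Fintype.card E) = ⟨θ, hθE⟩ :=
          FiniteField.pow_card _
        have h2 : θ ^ (q ^ s) = θ := by
          have h3 := congrArg Subtype.val h1
          rw [hcardE] at h3
          push_cast at h3
          simpa using h3
        have hqs1 : 1 < q ^ s := Nat.one_lt_pow (by omega) hq1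
        have h3 : θ ^ (q ^ s - 1) * θ = θ := by
          rw [← pow_succ]
          have h4 : q ^ s - 1 + 1 = q ^ s := by omega
          rw [h4, h2]
        exact mul_right_cancel₀ hθne (h3.trans (one_mul θ).symm)
      have hupow : (η ^ N) ^ (q ^ s - 1) = 1 := by
        ext
        push_cast
        exact hpow
      have hdvd : orderOf (η ^ N) ∣ q ^ s - 1 := orderOf_dvd_of_pow_eq_one hupow
      have hord : orderOf (η ^ N) = (q ^ r - 1) / N := by
        rw [orderOf_pow, horder, Nat.gcd_eq_right hNdvd]
      rw [hord] at hdvd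
      by_contra hne'
      have hslt : s < r := lt_of_le_of_ne (Nat.le_of_dvd hrpos hsd) hne'
      have h2s : 2 * s ≤ r := by
        obtain ⟨k, hk⟩ := hsd
        have hk2 : 2 ≤ k := by
          rcases Nat.lt_or_ge k 2 with h | h
          · interval_cases k <;> omega
          · exact h
        calc 2 * s ≤ k * s := Nat.mul_le_mul_right s hk2
        _ = s * k := Nat.mul_comm k s
        _ = r := hk.symm
      set A : ℕ := (q ^ r - 1) / (q ^ s - 1) with hA
      have hdvd1 : q ^ s - 1 ∣ q ^ r - 1 := by
        obtain ⟨k, hk⟩ := hsd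
        rw [hk, pow_mul]
        simpa using Nat.sub_dvd_pow_sub_pow (q ^ s) 1 k
      have hAmul : A * (q ^ s - 1) = q ^ r - 1 := Nat.div_mul_cancel hdvd1
      have hqs1 : 1 < q ^ s := Nat.one_lt_pow (by omega) hq1
      obtain ⟨k, hk⟩ := hdvd
      have hNmul : (q ^ r - 1) / N * N = q ^ r - 1 := Nat.div_mul_cancel hNdvd
      have hNk : N * (q ^ s - 1) = (q ^ r - 1) * k := by
        rw [hk]
        calc N * ((q ^ r - 1) / N * k) = (q ^ r - 1) / N * N * k := by ring
        _ = (q ^ r - 1) * k := by rw [hNmul]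
      have hAN : A ∣ N := by
        refine ⟨k, ?_⟩
        have h5 : N * (q ^ s - 1) = A * k * (q ^ s - 1) := by
          rw [hNk, ← hAmul]; ring
        exact Nat.eq_of_mul_eq_mul_right (by omega) h5
      have hdvd2 : q - 1 ∣ q ^ s - 1 := by
        simpa using Nat.sub_dvd_pow_sub_pow q 1 s
      have hAt : A ∣ t := by
        refine ⟨(q ^ s - 1) / (q - 1), ?_⟩
        rw [ht, ← hAmul, Nat.mul_div_assoc _ hdvd2]
      have hA2 : A ∣ 2 := hgcd ▸ Nat.dvd_gcd hAt hAN
      have hAle : A ≤ 2 := Nat.le_of_dvd (by norm_num) hA2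
      have h1 : q ^ r - 1 ≤ 2 * (q ^ s - 1) := by
        rw [← hAmul]
        exact Nat.mul_le_mul_right _ hAle
      have h2 : q ^ s * q ^ s ≤ q ^ r := by
        rw [← pow_add]
        exact Nat.pow_le_pow_right (by omega) (by omega)
      have hqs3 : 3 ≤ q ^ s := le_trans hq3 (Nat.le_self_pow (by omega) q)
      have h7 : 3 * q ^ s ≤ q ^ s * q ^ s := Nat.mul_le_mul_right _ hqs3
      have h8 : 3 * q ^ s ≤ q ^ r := le_trans h7 h2
      omega
    rw [← IntermediateField.adjoin.finrank hθint]
    exact hEr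
  have hli : LinearIndependent K fun i : Fin r => θ ^ (i : ℕ) := by
    have h := linearIndependent_pow (K := K) θ
    rw [hdeg] at h
    exact h
  haveI : Nonempty (Fin r) := ⟨⟨0, hrpos⟩⟩
  obtain ⟨B, hBi⟩ : ∃ B : Module.Basis (Fin r) K F, ∀ i : Fin r, B i = (η : F) ^ (N * (i : ℕ)) := by
    refine ⟨basisOfLinearIndependentOfCardEqFinrank hli (by simp [hrank]), fun i => ?_⟩
    have h := coe_basisOfLinearIndependentOfCardEqFinrank hli (by simp [hrank])
    calc basisOfLinearIndependentOfCardEqFinrank hli (by simp [hrank]) i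
        = θ ^ (i : ℕ) := congrFun h i
    _ = (η : F) ^ (N * (i : ℕ)) := by rw [hθdef, pow_mul]
  -- reindexing lemma
  have hsum : ∀ (j : Fin r) (f : ℕ → F),
      ∑ i ∈ Finset.Ico ((j : ℕ) + 1) r, f i = ∑ i ∈ Finset.Ioi j, f (i : ℕ) := by
    intro j f
    have hmap : (Finset.Ioi j).map Fin.valEmbedding = Finset.Ico ((j : ℕ) + 1) r := by
      ext a
      simp only [Finset.mem_Ico, Finset.mem_map, Finset.mem_Ioi, Fin.valEmbedding_apply]
      constructor
      · rintro ⟨i, hi, rfl⟩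
        rw [Fin.lt_def] at hi
        exact ⟨by omega, i.2⟩
      · rintro ⟨h1, h2⟩
        exact ⟨⟨a, h2⟩, by rw [Fin.lt_def]; exact h1, rfl⟩
    rw [← hmap, Finset.sum_map]
    rfl
  -- key representation lemma
  have key_repr : ∀ (j : Fin r) (c : ℕ → K),
      (η : F) ^ (N * (j : ℕ)) + ∑ i ∈ Finset.Ico ((j : ℕ) + 1) r, (c i : F) * (η : F) ^ (N * i)
      = ∑ i : Fin r, (if i = j then 1 else if j < i then c (i : ℕ) else 0) • B i := by
    intro j c
    have hmem : j ∈ Finset.univ (α := Fin r) := Finset.mem_univ j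
    rw [← Finset.add_sum_erase _ _ hmem]
    rw [if_pos rfl, one_smul, hBi j]
    congr 1
    have hsub : Finset.Ioi j ⊆ Finset.univ.erase j := by
      intro i hi
      simp only [Finset.mem_Ioi] at hi
      exact Finset.mem_erase.mpr ⟨ne_of_gt hi, Finset.mem_univ i⟩
    have hz : ∀ i ∈ Finset.univ.erase j, i ∉ Finset.Ioi j →
        (if i = j then (1 : K) else if j < i then c (i : ℕ) else 0) • B i = 0 := by
      intro i hi hni
      simp only [Finset.mem_erase] at hi
      simp only [Finset.mem_Ioi] at hni
      rw [if_neg hi.1, if_neg hni, zero_smul]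
    rw [← Finset.sum_subset hsub hz]
    rw [hsum j fun i => (c i : F) * (η : F) ^ (N * i)]
    refine Finset.sum_congr rfl fun i hi => ?_
    simp only [Finset.mem_Ioi] at hi
    rw [if_neg (ne_of_gt hi), if_pos hi, hBi i]
    rfl
  -- repr of P elements
  have repr_eq : ∀ (j : Fin r) (c : ℕ → K) (i : Fin r),
      B.repr ((η : F) ^ (N * (j : ℕ)) +
        ∑ i ∈ Finset.Ico ((j : ℕ) + 1) r, (c i : F) * (η : F) ^ (N * i)) i
        = if i = j then 1 else if j < i then c (i : ℕ) else 0 := by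
    intro j c i
    rw [key_repr j c]
    have h1 : (∑ i : Fin r, (if i = j then (1 : K) else if j < i then c (i : ℕ) else 0) • B i)
        = B.equivFun.symm (fun i => if i = j then 1 else if j < i then c (i : ℕ) else 0) := by
      rw [Module.Basis.equivFun_symm_apply]
    rw [h1]
    have h2 : B.repr (B.equivFun.symm fun i => if i = j then (1:K) else if j < i then c (i : ℕ) else 0) i
        = B.equivFun (B.equivFun.symm fun i => if i = j then (1:K) else if j < i then c (i : ℕ) else 0) i := by
      rw [Module.Basis.equivFun_apply]
    rw [h2, LinearEquiv.apply_symm_apply]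
  -- support / lead coefficient machinery
  have hsupp : ∀ y : F, y ≠ 0 → (B.repr y).support.Nonempty := by
    intro y hy
    rw [Finsupp.support_nonempty_iff]
    intro h
    exact hy ((LinearEquiv.map_eq_zero_iff B.repr).mp h)
  set j0 : F → Fin r := fun y =>
    if h : (B.repr y).support.Nonempty then (B.repr y).support.min' h else ⟨0, hrpos⟩ with hj0
  set lam : F → K := fun y => B.repr y (j0 y) with hlam
  have hj0eq : ∀ (y : F) (h : (B.repr y).support.Nonempty),
      j0 y = (B.repr y).support.min' h := by
    intro y h
    rw [hj0]
    simp only [dif_pos h]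
  have hlamne : ∀ y : F, y ≠ 0 → lam y ≠ 0 := by
    intro y hy
    have h := hsupp y hy
    have hmem : j0 y ∈ (B.repr y).support := by
      rw [hj0eq y h]; exact Finset.min'_mem _ h
    exact Finsupp.mem_support_iff.mp hmem
  have hj0min : ∀ y : F, y ≠ 0 → ∀ i : Fin r, i < j0 y → B.repr y i = 0 := by
    intro y hy i hi
    by_contra h0
    have hmem : i ∈ (B.repr y).support := Finsupp.mem_support_iff.mpr h0
    have hle := Finset.min'_le _ _ hmem
    rw [← hj0eq y (hsupp y hy)] at hle
    exact absurd hi (not_lt.mpr hle)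
  -- lead data of a P element
  have hlead : ∀ (j : Fin r) (c : ℕ → K),
      j0 ((η : F) ^ (N * (j : ℕ)) +
        ∑ i ∈ Finset.Ico ((j : ℕ) + 1) r, (c i : F) * (η : F) ^ (N * i)) = j ∧
      lam ((η : F) ^ (N * (j : ℕ)) +
        ∑ i ∈ Finset.Ico ((j : ℕ) + 1) r, (c i : F) * (η : F) ^ (N * i)) = 1 := by
    intro j c
    set x := (η : F) ^ (N * (j : ℕ)) +
        ∑ i ∈ Finset.Ico ((j : ℕ) + 1) r, (c i : F) * (η : F) ^ (N * i) with hx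
    have h1 : B.repr x j = 1 := by rw [hx, repr_eq]; simp
    have hjmem : j ∈ (B.repr x).support :=
      Finsupp.mem_support_iff.mpr (by rw [h1]; exact one_ne_zero)
    have hmin : j0 x = j := by
      rw [hj0eq x ⟨j, hjmem⟩]
      apply le_antisymm
      · exact Finset.min'_le _ _ hjmem
      · apply Finset.le_min'
        intro i hi
        by_contra hlt
        push_neg at hlt
        have hne0 := Finsupp.mem_support_iff.mp hi
        rw [hx, repr_eq j c i, if_neg (ne_of_lt hlt), if_neg (by exact not_lt.mpr (le_of_lt hlt))] at hne0
        exact hne0 rfl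
    exact ⟨hmin, by rw [hlam]; simp only []; rw [hmin, h1]⟩
  -- P elements are nonzero
  have hPne : ∀ (j : Fin r) (c : ℕ → K),
      (η : F) ^ (N * (j : ℕ)) +
        ∑ i ∈ Finset.Ico ((j : ℕ) + 1) r, (c i : F) * (η : F) ^ (N * i) ≠ 0 := by
    intro j c h0
    have h1 := repr_eq j c j
    rw [h0] at h1
    simp at h1
  -- normalization
  have hnorm : ∀ y : F, y ≠ 0 → ∃ c : ℕ → K,
      ((lam y)⁻¹ : K) • y = (η : F) ^ (N * ((j0 y) : ℕ)) +
        ∑ i ∈ Finset.Ico (((j0 y) : ℕ) + 1) r, (c i : F) * (η : F) ^ (N * i) := by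
    intro y hy
    set x : F := ((lam y)⁻¹ : K) • y with hx
    have hxr : ∀ i : Fin r, B.repr x i = (lam y)⁻¹ * B.repr y i := by
      intro i
      rw [hx, map_smul]
      rfl
    refine ⟨fun n => if h : n < r then B.repr x ⟨n, h⟩ else 0, ?_⟩
    rw [key_repr (j0 y) _]
    have hd : ∀ i : Fin r,
        (if i = j0 y then (1 : K) else if j0 y < i then
          (if h : (i : ℕ) < r then B.repr x ⟨(i : ℕ), h⟩ else 0) else 0) = B.repr x i := by
      intro i
      rcases lt_trichotomy i (j0 y) with h | h | h
      · rw [if_neg (ne_of_lt h), if_neg (not_lt_of_gt h)]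
        have h5 := hj0min y hy i h
        rw [hxr, h5, mul_zero]
      · rw [if_pos h, h, hxr]
        exact (inv_mul_cancel₀ (hlamne y hy)).symm
      · rw [if_neg (ne_of_gt h), if_pos h, dif_pos i.2]
    have h6 : (∑ i : Fin r, (if i = j0 y then (1 : K) else if j0 y < i then
          (if h : (i : ℕ) < r then B.repr x ⟨(i : ℕ), h⟩ else 0) else 0) • B i)
        = ∑ i : Fin r, B.repr x i • B i :=
      Finset.sum_congr rfl fun i _ => by rw [hd i]
    rw [h6, Module.Basis.sum_repr]
  -- the equivalence
  let e : {y : F // y ≠ 0 ∧ ∃ w : F, w ≠ 0 ∧ w ^ 2 = y} ≃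
      {x : F //
        (∃ j : Fin r, ∃ c : ℕ → K,
          x = (η : F) ^ (N * (j : ℕ)) +
            ∑ i ∈ Finset.Ico ((j : ℕ) + 1) r, (c i : F) * (η : F) ^ (N * i)) ∧
        ∃ w : F, w ≠ 0 ∧ w ^ 2 = x} × Kˣ := by
    refine
      { toFun := fun y => (⟨((lam y.1)⁻¹ : K) • y.1, ?_, ?_⟩,
          Units.mk0 (lam y.1) (hlamne y.1 y.2.1)),
        invFun := fun p => ⟨((p.2 : K) : K) • p.1.1, ?_, ?_⟩,
        left_inv := ?_, right_inv := ?_ }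
    · -- P property of normalized element
      obtain ⟨c, hc⟩ := hnorm y.1 y.2.1
      exact ⟨j0 y.1, c, hc⟩
    · -- square property of normalized element
      obtain ⟨w2, hw2, hw2sq⟩ := y.2.2
      obtain ⟨w1, hw1, hw1sq⟩ := hKsq (lam y.1)⁻¹ (inv_ne_zero (hlamne y.1 y.2.1))
      refine ⟨w1 * w2, mul_ne_zero hw1 hw2, ?_⟩
      rw [mul_pow, hw1sq, hw2sq]
      rfl
    · -- nonzero
      obtain ⟨⟨j, c, hc⟩, hsq2⟩ := p.1.2
      have hx := hPne j c
      rw [← hc] at hx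
      exact smul_ne_zero (by exact_mod_cast p.2.ne_zero) hx
    · -- square
      obtain ⟨⟨j, c, hc⟩, w2, hw2, hw2sq⟩ := p.1.2
      obtain ⟨w1, hw1, hw1sq⟩ := hKsq (p.2 : K) p.2.ne_zero
      refine ⟨w1 * w2, mul_ne_zero hw1 hw2, ?_⟩
      rw [mul_pow, hw1sq, hw2sq]
      rfl
    · -- left inverse
      rintro ⟨y, hy0, hysq⟩
      simp only [Units.val_mk0]
      ext
      exact smul_inv_smul₀ (hlamne y hy0) y
    · -- right inverse
      rintro ⟨⟨x, ⟨j, c, hc⟩, hxsq⟩, k⟩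
      have hx0 : x ≠ 0 := by rw [hc]; exact hPne j c
      have hy0 : ((k : K) : K) • x ≠ 0 :=
        smul_ne_zero (by exact_mod_cast k.ne_zero) hx0
      -- supports agree
      have hrepr : B.repr (((k : K) : K) • x) = (k : K) • B.repr x := map_smul _ _ _
      have hsupp2 : (B.repr (((k : K) : K) • x)).support = (B.repr x).support := by
        rw [hrepr]
        exact Finsupp.support_smul_eq k.ne_zero
      have hj0x : j0 x = j := by rw [hc]; exact (hlead j c).1
      have hlamx : lam x = 1 := by rw [hc]; exact (hlead j c).2
      have hj00 : j0 (((k : K) : K) • x) = j0 x := by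
        have h9 : ∀ (s1 s2 : Finset (Fin r)) (h1 : s1.Nonempty) (h2 : s2.Nonempty),
            s1 = s2 → s1.min' h1 = s2.min' h2 := by
          rintro s1 s2 h1 h2 rfl; rfl
        rw [hj0eq _ (hsupp _ hy0), hj0eq x (hsupp x hx0)]
        exact h9 _ _ _ _ hsupp2
      have hlamy : lam (((k : K) : K) • x) = (k : K) := by
        rw [hlam]
        simp only []
        rw [hj00, hrepr]
        rw [Finsupp.smul_apply]
        have : B.repr x (j0 x) = 1 := hlamx
        rw [this]
        simp
      refine Prod.ext ?_ ?_
      · ext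
        simp only []
        rw [hlamy]
        exact inv_smul_smul₀ (by exact_mod_cast k.ne_zero) x
      · rw [Units.ext_iff]
        simp only [Units.val_mk0]
        exact hlamy
  -- cardinality of nonzero squares
  have hT : Nat.card {y : F // y ≠ 0 ∧ ∃ w : F, w ≠ 0 ∧ w ^ 2 = y} = (q ^ r - 1) / 2 := by
    have e2 : {y : F // y ≠ 0 ∧ ∃ w : F, w ≠ 0 ∧ w ^ 2 = y} ≃
        ((powMonoidHom 2 : Fˣ →* Fˣ).range) := by
      refine
        { toFun := fun y => ⟨Units.mk0 y.1 y.2.1, ?_⟩,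
          invFun := fun u => ⟨(u.1 : F), Units.ne_zero _, ?_⟩,
          left_inv := ?_, right_inv := ?_ }
      · obtain ⟨w, hw, hwsq⟩ := y.2.2
        refine ⟨Units.mk0 w hw, ?_⟩
        ext
        simpa [powMonoidHom_apply] using hwsq
      · obtain ⟨v, hv⟩ := u.2
        refine ⟨(v : F), Units.ne_zero v, ?_⟩
        have := congrArg (Units.val) hv
        simpa [powMonoidHom_apply] using this
      · rintro ⟨y, hy⟩; rfl
      · rintro ⟨u, hu⟩
        ext
        rfl
    rw [Nat.card_congr e2]
    -- |range| * |ker| = |Fˣ|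
    have hker : ((powMonoidHom 2 : Fˣ →* Fˣ).ker : Set Fˣ) = {1, -1} := by
      ext x
      simp only [SetLike.mem_coe, MonoidHom.mem_ker, powMonoidHom_apply, Set.mem_insert_iff,
        Set.mem_singleton_iff]
      constructor
      · intro h
        have h2 : (x : F) * (x : F) = 1 := by
          have := congrArg Units.val h
          push_cast at this
          rw [← this, sq]
        rcases mul_self_eq_one_iff.mp h2 with h3 | h3
        · left; ext; exact h3
        · right; ext; rw [h3]; simp
      · rintro (rfl | rfl)
        · simp
        · ext
          push_cast
          ring
    have hkcard : Nat.card ((powMonoidHom 2 : Fˣ →* Fˣ).ker) = 2 := by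
      have h1 : Nat.card ((powMonoidHom 2 : Fˣ →* Fˣ).ker) =
          Nat.card ({1, -1} : Set Fˣ) := by
        apply Nat.card_congr
        exact Equiv.setCongr hker
      rw [h1, Nat.card_coe_set_eq, Set.ncard_pair]
      intro h
      have := congrArg Units.val h
      push_cast at this
      exact Ring.neg_one_ne_one_of_char_ne_two hchar this.symm
    have hiso : Nat.card Fˣ =
        Nat.card ((powMonoidHom 2 : Fˣ →* Fˣ).range) *
        Nat.card ((powMonoidHom 2 : Fˣ →* Fˣ).ker) := by
      rw [Subgroup.card_eq_card_quotient_mul_card_subgroup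
        ((powMonoidHom 2 : Fˣ →* Fˣ).ker)]
      congr 1
      exact Nat.card_congr (QuotientGroup.quotientKerEquivRange _).toEquiv
    rw [hkcard, Nat.card_eq_fintype_card, hcardU] at hiso
    omega
  have hKu : Nat.card Kˣ = q - 1 := by
    rw [Nat.card_units, hK]
  have hfinal := Nat.card_congr e
  rw [hT, Nat.card_prod, hKu] at hfinal
  rw [hrhs]
  have hq1pos : 0 < q - 1 := Nat.sub_pos_of_lt hq1
  have : (q - 1) * u = Nat.card {x : F //
      (∃ j : Fin r, ∃ c : ℕ → K,
        x = (η : F) ^ (N * (j : ℕ)) +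
          ∑ i ∈ Finset.Ico ((j : ℕ) + 1) r, (c i : F) * (η : F) ^ (N * i)) ∧
      ∃ w : F, w ≠ 0 ∧ w ^ 2 = x} * (q - 1) := by rw [← hfinal, hhalf]
  rw [mul_comm] at this
  exact (Nat.eq_of_mul_eq_mul_right hq1pos this.symm)
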